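/- Let φ, φ̃ : M → N be two smooth maps expressed in the same local charts, with corresponding local variables u₀ and ũ₀ (the components of their tension fields). Then on any open set D whose closure is compact and contained in the chart domain, there exists a constant C > 0 such that |Δ(φ − φ̃)| ≤ C( |φ − φ̃| + |dφ − dφ̃| + |u₀ − ũ₀| ), where φ, φ̃ denote the vector-valued local representations of the maps and Δ acts componentwise. -/

import Mathlib

noncomputable section

open scoped BigOperators

namespace Polyharm

/-- Partial derivative of a scalar function on `ℝ^d` in the `i`-th coordinate direction. -/
def pd {d : ℕ} (i : Fin d) (f : (Fin d → ℝ) → ℝ) (x : Fin d → ℝ) : ℝ :=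
  fderiv ℝ f x (Pi.single i 1)

/-- Euclidean norm of a finite family of real numbers. -/
def vnorm {ι : Type} [Fintype ι] (f : ι → ℝ) : ℝ :=
  Real.sqrt (∑ i, f i ^ 2)

/-- Local-coordinate data for maps between Riemannian manifolds: the inverse metric
`g^{ij}` and the Christoffel symbols `Γ^k_{ij}` of a chart of the domain `(M,g)`, and
the Christoffel symbols `Γ^α_{βγ}` of a chart of the target `(N,h)`. -/
structure ChartData (m n : ℕ) where
  ginv : (Fin m → ℝ) → Fin m → Fin m → ℝ
  ΓM : (Fin m → ℝ) → Fin m → Fin m → Fin m → ℝ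
  ΓN : (Fin n → ℝ) → Fin n → Fin n → Fin n → ℝ

variable {m n : ℕ}

/-- Smoothness of the domain data. -/
def ChartData.SmoothDomain (P : ChartData m n) : Prop :=
  (∀ i j, ContDiff ℝ (⊤ : ℕ∞) fun x => P.ginv x i j) ∧
  (∀ k i j, ContDiff ℝ (⊤ : ℕ∞) fun x => P.ΓM x k i j)

/-- Smoothness of the target Christoffel symbols. -/
def ChartData.SmoothTarget (P : ChartData m n) : Prop :=
  ∀ α β γ, ContDiff ℝ (⊤ : ℕ∞) fun y => P.ΓN y α β γ

/-- The chart data comes from Riemannian metrics: `g^{ij}` is symmetric and positive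
definite, and the Christoffel symbols are symmetric in their lower indices. -/
def ChartData.Riemannian (P : ChartData m n) : Prop :=
  (∀ x i j, P.ginv x i j = P.ginv x j i) ∧
  (∀ x (v : Fin m → ℝ), v ≠ 0 → 0 < ∑ i, ∑ j, P.ginv x i j * v i * v j) ∧
  (∀ x k i j, P.ΓM x k i j = P.ΓM x k j i) ∧
  (∀ y α β γ, P.ΓN y α β γ = P.ΓN y α γ β)

/-- The Laplace–Beltrami operator on scalar functions:
`-Δ f = g^{ij} ∂²f/∂x^i∂x^j - g^{ij} Γ^k_{ij} ∂f/∂x^k`. -/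
def lap (P : ChartData m n) (f : (Fin m → ℝ) → ℝ) (x : Fin m → ℝ) : ℝ :=
  -((∑ i, ∑ j, P.ginv x i j * pd i (fun z => pd j f z) x)
    - ∑ i, ∑ j, ∑ k, P.ginv x i j * P.ΓM x k i j * pd k f x)

/-- `φ_i^β = ∂φ^β/∂x^i`. -/
def dphi (φ : (Fin m → ℝ) → Fin n → ℝ) (x : Fin m → ℝ) (i : Fin m) (β : Fin n) : ℝ :=
  pd i (fun z => φ z β) x

/-- `⟨dφ^β, dψ^γ⟩ = g^{ij} φ_i^β ψ_j^γ`. -/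
def dpair (P : ChartData m n) (φ ψ : (Fin m → ℝ) → Fin n → ℝ) (x : Fin m → ℝ)
    (β γ : Fin n) : ℝ :=
  ∑ i, ∑ j, P.ginv x i j * dphi φ x i β * dphi ψ x j γ

/-- Components `R^α_{δβγ}` of the curvature tensor of the target, with the sign
convention `R(∂/∂y^β, ∂/∂y^γ)∂/∂y^δ = R^α_{δβγ} ∂/∂y^α` of the paper. -/
def Rc (P : ChartData m n) (y : Fin n → ℝ) (α δ β γ : Fin n) : ℝ :=
  pd β (fun z => P.ΓN z α γ δ) y - pd γ (fun z => P.ΓN z α β δ) y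
    + ∑ μ, (P.ΓN y α β μ * P.ΓN y μ γ δ - P.ΓN y α γ μ * P.ΓN y μ β δ)

/-- `2S^α_{βωϑ} = ∂Γ^α_{βϑ}/∂y^ω + Γ^γ_{βϑ}Γ^α_{ωγ} + ∂Γ^α_{ωϑ}/∂y^β + Γ^γ_{ωϑ}Γ^α_{βγ}`. -/
def Scoef (P : ChartData m n) (y : Fin n → ℝ) (α β ω ϑ : Fin n) : ℝ :=
  (pd ω (fun z => P.ΓN z α β ϑ) y + (∑ γ, P.ΓN y γ β ϑ * P.ΓN y α ω γ)
    + pd β (fun z => P.ΓN z α ω ϑ) y + ∑ γ, P.ΓN y γ ω ϑ * P.ΓN y α β γ) / 2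

/-- The operator
`A^α(η,ξ) = ξ_i^ϑ(-2 g^{ij} φ_j^β Γ^α_{βϑ}) + η^ϑ((Δφ^β)Γ^α_{βϑ} - g^{ij} φ_j^β φ_i^ω S^α_{βωϑ})`. -/
def Aop (P : ChartData m n) (φ : (Fin m → ℝ) → Fin n → ℝ) (η : Fin n → ℝ)
    (ξ : Fin m → Fin n → ℝ) (x : Fin m → ℝ) (α : Fin n) : ℝ :=
  (∑ ϑ, ∑ i, ξ i ϑ * (-2 * ∑ j, ∑ β, P.ginv x i j * dphi φ x j β * P.ΓN (φ x) α β ϑ))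
    + ∑ ϑ, η ϑ * ((∑ β, lap P (fun z => φ z β) x * P.ΓN (φ x) α β ϑ)
        - ∑ i, ∑ j, ∑ β, ∑ ω,
            P.ginv x i j * dphi φ x j β * dphi φ x i ω * Scoef P (φ x) α β ω ϑ)

/-- The operator `A` applied to (the components of) a section `σ` of `φ⁻¹TN`:
`A(σ, ∂σ)`. -/
def Asec (P : ChartData m n) (φ σ : (Fin m → ℝ) → Fin n → ℝ) (x : Fin m → ℝ)
    (α : Fin n) : ℝ :=
  Aop P φ (σ x) (fun i ϑ => pd i (fun z => σ z ϑ) x) x α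

/-- Components of the tension field `τ^α(φ) = -Δφ^α + g^{ij} Γ^α_{ϑβ} φ_i^ϑ φ_j^β`. -/
def tension (P : ChartData m n) (φ : (Fin m → ℝ) → Fin n → ℝ) (x : Fin m → ℝ)
    (α : Fin n) : ℝ :=
  -(lap P (fun z => φ z α) x)
    + ∑ i, ∑ j, ∑ ϑ, ∑ β,
        P.ginv x i j * P.ΓN (φ x) α ϑ β * dphi φ x i ϑ * dphi φ x j β

/-- The components `u_j` of `Δ̄^j τ(φ)`: `u_0 = τ(φ)` and
`u_{j+1} = Δ u_j + A(u_j, ∂u_j)` (local expression of the rough Laplacian). -/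
def uvar (P : ChartData m n) (φ : (Fin m → ℝ) → Fin n → ℝ) :
    ℕ → (Fin m → ℝ) → Fin n → ℝ
  | 0 => tension P φ
  | j+1 => fun x α => lap P (fun z => uvar P φ j z α) x + Asec P φ (uvar P φ j) x α

/-- `v_j = du_j`, i.e. `v_{j i}^α = ∂u_j^α/∂x^i`. -/
def vvar (P : ChartData m n) (φ : (Fin m → ℝ) → Fin n → ℝ) (j : ℕ) (x : Fin m → ℝ)
    (i : Fin m) (α : Fin n) : ℝ :=
  pd i (fun z => uvar P φ j z α) x

/-- Components of the pull-back covariant derivative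
`(∇̄_{∂_i} σ)^γ = ∂σ^γ/∂x^i + Γ^γ_{βδ}(φ) φ_i^β σ^δ`. -/
def covD (P : ChartData m n) (φ σ : (Fin m → ℝ) → Fin n → ℝ) (i : Fin m)
    (x : Fin m → ℝ) (γ : Fin n) : ℝ :=
  pd i (fun z => σ z γ) x + ∑ β, ∑ δ, P.ΓN (φ x) γ β δ * dphi φ x i β * σ x δ

/-- `(Tr_g R^N(X, dφ(·))dφ(·))^α`. -/
def trRphi (P : ChartData m n) (φ X : (Fin m → ℝ) → Fin n → ℝ) (x : Fin m → ℝ)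
    (α : Fin n) : ℝ :=
  ∑ i, ∑ j, ∑ β, ∑ γ, ∑ δ,
    P.ginv x i j * Rc P (φ x) α δ β γ * X x β * dphi φ x i γ * dphi φ x j δ

/-- `(Tr_g R^N(dφ(·), X)dφ(·))^α`. -/
def trRphi2 (P : ChartData m n) (φ X : (Fin m → ℝ) → Fin n → ℝ) (x : Fin m → ℝ)
    (α : Fin n) : ℝ :=
  ∑ i, ∑ j, ∑ β, ∑ γ, ∑ δ,
    P.ginv x i j * Rc P (φ x) α δ β γ * dphi φ x i β * X x γ * dphi φ x j δ

/-- `(Tr_g R^N(∇̄_{(·)}W, Z)dφ(·))^α`. -/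
def trRD (P : ChartData m n) (φ W Z : (Fin m → ℝ) → Fin n → ℝ) (x : Fin m → ℝ)
    (α : Fin n) : ℝ :=
  ∑ i, ∑ j, ∑ β, ∑ γ, ∑ δ,
    P.ginv x i j * Rc P (φ x) α δ β γ * covD P φ W i x β * Z x γ * dphi φ x j δ

/-- `(Tr_g R^N(W, ∇̄_{(·)}Z)dφ(·))^α`. -/
def trRD2 (P : ChartData m n) (φ W Z : (Fin m → ℝ) → Fin n → ℝ) (x : Fin m → ℝ)
    (α : Fin n) : ℝ :=
  ∑ i, ∑ j, ∑ β, ∑ γ, ∑ δ,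
    P.ginv x i j * Rc P (φ x) α δ β γ * W x β * covD P φ Z i x γ * dphi φ x j δ

/-- Local components of Maeta's `k`-tension field `τ_k(φ)`, for `k = 2s`:
`τ_{2s}(φ) = Δ̄^{2s-1}τ(φ) - R^N(Δ̄^{2s-2}τ(φ), dφ(e_j))dφ(e_j)
  - Σ_{ℓ=1}^{s-1}( R^N(∇̄_{e_j}Δ̄^{s+ℓ-2}τ(φ), Δ̄^{s-ℓ-1}τ(φ))dφ(e_j)
                 - R^N(Δ̄^{s+ℓ-2}τ(φ), ∇̄_{e_j}Δ̄^{s-ℓ-1}τ(φ))dφ(e_j) )`,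
and for `k = 2s+1`:
`τ_{2s+1}(φ) = Δ̄^{2s}τ(φ) - R^N(Δ̄^{2s-1}τ(φ), dφ(e_j))dφ(e_j)
  - Σ_{ℓ=1}^{s-1}( R^N(∇̄_{e_j}Δ̄^{s+ℓ-1}τ(φ), Δ̄^{s-ℓ-1}τ(φ))dφ(e_j)
                 - R^N(Δ̄^{s+ℓ-1}τ(φ), ∇̄_{e_j}Δ̄^{s-ℓ-1}τ(φ))dφ(e_j) )
  - R^N(∇̄_{e_j}Δ̄^{s-1}τ(φ), Δ̄^{s-1}τ(φ))dφ(e_j)`. -/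
def tauK (P : ChartData m n) (φ : (Fin m → ℝ) → Fin n → ℝ) (k : ℕ) (x : Fin m → ℝ)
    (α : Fin n) : ℝ :=
  if Even k then
    uvar P φ (k-1) x α - trRphi P φ (uvar P φ (k-2)) x α
      - ∑ ℓ ∈ Finset.Icc 1 (k/2 - 1),
          (trRD P φ (uvar P φ (k/2 + ℓ - 2)) (uvar P φ (k/2 - ℓ - 1)) x α
            - trRD2 P φ (uvar P φ (k/2 + ℓ - 2)) (uvar P φ (k/2 - ℓ - 1)) x α)
  else
    uvar P φ (k-1) x α - trRphi P φ (uvar P φ (k-2)) x α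
      - (∑ ℓ ∈ Finset.Icc 1 (k/2 - 1),
          (trRD P φ (uvar P φ (k/2 + ℓ - 1)) (uvar P φ (k/2 - ℓ - 1)) x α
            - trRD2 P φ (uvar P φ (k/2 + ℓ - 1)) (uvar P φ (k/2 - ℓ - 1)) x α))
      - trRD P φ (uvar P φ (k/2 - 1)) (uvar P φ (k/2 - 1)) x α

/-- Components `(∇dφ)(∂_i,∂_j)^α` of the second fundamental form of `φ`. -/
def sff (P : ChartData m n) (φ : (Fin m → ℝ) → Fin n → ℝ) (x : Fin m → ℝ)
    (i j : Fin m) (α : Fin n) : ℝ :=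
  pd i (fun z => dphi φ z j α) x - (∑ k, P.ΓM x k i j * dphi φ x k α)
    + ∑ β, ∑ γ, P.ΓN (φ x) α β γ * dphi φ x i β * dphi φ x j γ

lemma vnorm_nonneg {ι : Type} [Fintype ι] (f : ι → ℝ) : 0 ≤ vnorm f :=
  Real.sqrt_nonneg _

lemma abs_le_vnorm {ι : Type} [Fintype ι] (f : ι → ℝ) (i : ι) : |f i| ≤ vnorm f := by
  rw [← Real.sqrt_sq_eq_abs]
  exact Real.sqrt_le_sqrt
    (Finset.single_le_sum (fun j _ => sq_nonneg (f j)) (Finset.mem_univ i))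

lemma vnorm_le_sum {ι : Type} [Fintype ι] (f : ι → ℝ) : vnorm f ≤ ∑ i, |f i| := by
  have h : ∑ i, f i ^ 2 ≤ (∑ i, |f i|) ^ 2 := by
    rw [sq, Finset.sum_mul]
    refine Finset.sum_le_sum fun i _ => ?_
    have h1 : |f i| ≤ ∑ j, |f j| :=
      Finset.single_le_sum (f := fun j => |f j|) (fun j _ => abs_nonneg (f j)) (Finset.mem_univ i)
    have h2 : f i ^ 2 = |f i| * |f i| := by rw [← sq_abs]; ring
    rw [h2]
    exact mul_le_mul_of_nonneg_left h1 (abs_nonneg _)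
  calc vnorm f ≤ Real.sqrt ((∑ i, |f i|) ^ 2) := Real.sqrt_le_sqrt h
  _ = ∑ i, |f i| := Real.sqrt_sq (Finset.sum_nonneg fun i _ => abs_nonneg _)

lemma pi_norm_le_vnorm {ι : Type} [Fintype ι] (f : ι → ℝ) : ‖f‖ ≤ vnorm f := by
  refine (pi_norm_le_iff_of_nonneg (vnorm_nonneg f)).2 fun i => ?_
  simpa [Real.norm_eq_abs] using abs_le_vnorm f i

lemma contDiff_pd {d : ℕ} {f : (Fin d → ℝ) → ℝ} (hf : ContDiff ℝ (⊤ : ℕ∞) f) (i : Fin d) :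
    ContDiff ℝ (⊤ : ℕ∞) (pd i f) := by
  have h : ContDiff ℝ (⊤ : ℕ∞) (fderiv ℝ f) := hf.fderiv_right (by exact_mod_cast le_top)
  exact h.clm_apply contDiff_const

lemma pd_sub {d : ℕ} {f g : (Fin d → ℝ) → ℝ} (hf : Differentiable ℝ f)
    (hg : Differentiable ℝ g) (i : Fin d) (x : Fin d → ℝ) :
    pd i (fun z => f z - g z) x = pd i f x - pd i g x := by
  unfold pd
  rw [fderiv_fun_sub (hf x) (hg x)]
  rfl

lemma lap_sub (P : ChartData m n) {f g : (Fin m → ℝ) → ℝ}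
    (hf : ContDiff ℝ (⊤ : ℕ∞) f) (hg : ContDiff ℝ (⊤ : ℕ∞) g) (x : Fin m → ℝ) :
    lap P (fun z => f z - g z) x = lap P f x - lap P g x := by
  have hfd := hf.differentiable (by simp)
  have hgd := hg.differentiable (by simp)
  have h1 : ∀ (j : Fin m) (z : Fin m → ℝ),
      pd j (fun z => f z - g z) z = pd j f z - pd j g z := fun j z => pd_sub hfd hgd j z
  have h2 : ∀ (i j : Fin m) (z : Fin m → ℝ),
      pd i (fun w => pd j f w - pd j g w) z
        = pd i (fun w => pd j f w) z - pd i (fun w => pd j g w) z := by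
    intro i j z
    exact pd_sub ((contDiff_pd hf j).differentiable (by simp))
      ((contDiff_pd hg j).differentiable (by simp)) i z
  unfold lap
  simp only [h1, h2, mul_sub, Finset.sum_sub_distrib]
  ring

lemma lap_eq_Q_sub_u (P : ChartData m n) (φ : (Fin m → ℝ) → Fin n → ℝ)
    (x : Fin m → ℝ) (α : Fin n) :
    lap P (fun z => φ z α) x =
      (∑ i, ∑ j, ∑ ϑ, ∑ β,
        P.ginv x i j * P.ΓN (φ x) α ϑ β * dphi φ x i ϑ * dphi φ x j β)
      - uvar P φ 0 x α := by
  have h : uvar P φ 0 x α = tension P φ x α := rfl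
  rw [h]; unfold tension; ring

lemma bound_of_continuousOn {m : ℕ} {ι : Type} [Fintype ι] {K : Set (Fin m → ℝ)}
    (hK : IsCompact K) {F : (Fin m → ℝ) → ι → ℝ}
    (hF : ∀ i, ContinuousOn (fun x => F x i) K) :
    ∃ B, 0 ≤ B ∧ ∀ x ∈ K, ∀ i, |F x i| ≤ B := by
  have hFc : ContinuousOn F K := continuousOn_pi.2 hF
  obtain ⟨C, hC⟩ := hK.exists_bound_of_continuousOn hFc
  refine ⟨max C 0, le_max_right _ _, fun x hx i => ?_⟩
  calc |F x i| = ‖F x i‖ := (Real.norm_eq_abs _).symm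
  _ ≤ ‖F x‖ := norm_le_pi_norm _ i
  _ ≤ C := hC x hx
  _ ≤ max C 0 := le_max_left _ _

lemma lipschitz_on_compact {k : ℕ} {G : (Fin k → ℝ) → ℝ} (hG : ContDiff ℝ (⊤ : ℕ∞) G)
    {S : Set (Fin k → ℝ)} (hS : IsCompact S) :
    ∃ L, 0 ≤ L ∧ ∀ y ∈ S, ∀ y' ∈ S, |G y - G y'| ≤ L * ‖y - y'‖ := by
  obtain ⟨R, hR⟩ := hS.isBounded.subset_closedBall (0 : Fin k → ℝ)
  have hball : IsCompact (Metric.closedBall (0 : Fin k → ℝ) R) :=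
    isCompact_closedBall _ _
  have hfc : ContinuousOn (fderiv ℝ G) (Metric.closedBall 0 R) :=
    (hG.continuous_fderiv (by simp)).continuousOn
  obtain ⟨C, hC⟩ := hball.exists_bound_of_continuousOn hfc
  refine ⟨max C 0, le_max_right _ _, fun y hy y' hy' => ?_⟩
  have h : ‖G y - G y'‖ ≤ max C 0 * ‖y - y'‖ := (convex_closedBall (0 : Fin k → ℝ) R).norm_image_sub_le_of_norm_fderiv_le
    (fun z _ => (hG.differentiable (by simp)).differentiableAt)
    (fun z hz => (hC z hz).trans (le_max_left _ _)) (hR hy') (hR hy)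
  calc |G y - G y'| = ‖G y - G y'‖ := (Real.norm_eq_abs _).symm
  _ ≤ max C 0 * ‖y - y'‖ := h

lemma mul4_abs_le {a b c d A B C D : ℝ} (ha : |a| ≤ A) (hb : |b| ≤ B) (hc : |c| ≤ C)
    (hd : |d| ≤ D) : |a * b * c * d| ≤ A * B * C * D := by
  have hA : 0 ≤ A := le_trans (abs_nonneg a) ha
  have hB : 0 ≤ B := le_trans (abs_nonneg b) hb
  have hC : 0 ≤ C := le_trans (abs_nonneg c) hc
  calc |a * b * c * d| = |a| * |b| * |c| * |d| := by rw [abs_mul, abs_mul, abs_mul]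
  _ ≤ A * B * C * D := by
    apply mul_le_mul _ hd (abs_nonneg _) (mul_nonneg (mul_nonneg hA hB) hC)
    apply mul_le_mul _ hc (abs_nonneg _) (mul_nonneg hA hB)
    exact mul_le_mul ha hb (abs_nonneg _) hA

/-- (First lemma in the proof of Theorem 1.2.)
For two smooth maps `φ, φ̃` in the same local charts, on any open set `D` with
compact closure contained in the chart domain `U` there exists `C > 0` with
`|Δ(φ - φ̃)| ≤ C(|φ - φ̃| + |dφ - dφ̃| + |u₀ - ũ₀|)`. -/
theorem estimate_laplacian_difference_of_maps
    {m n : ℕ} (P : ChartData m n)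
    (hPdom : P.SmoothDomain) (hPtar : P.SmoothTarget)
    (U : Set (Fin m → ℝ)) (hUopen : IsOpen U)
    (φ ψ : (Fin m → ℝ) → Fin n → ℝ)
    (hφ : ContDiff ℝ (⊤ : ℕ∞) φ) (hψ : ContDiff ℝ (⊤ : ℕ∞) ψ)
    (D : Set (Fin m → ℝ)) (hDopen : IsOpen D) (hDcpt : IsCompact (closure D))
    (hDsub : closure D ⊆ U) :
    ∃ C > 0, ∀ x ∈ D,
      vnorm (fun α : Fin n => lap P (fun z => φ z α - ψ z α) x)
        ≤ C * (vnorm (fun α : Fin n => φ x α - ψ x α)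
          + vnorm (fun p : Fin m × Fin n => dphi φ x p.1 p.2 - dphi ψ x p.1 p.2)
          + vnorm (fun α : Fin n => uvar P φ 0 x α - uvar P ψ 0 x α)) := by
  classical
  have hφc : ∀ β, ContDiff ℝ (⊤ : ℕ∞) (fun z => φ z β) := fun β => contDiff_pi.1 hφ β
  have hψc : ∀ β, ContDiff ℝ (⊤ : ℕ∞) (fun z => ψ z β) := fun β => contDiff_pi.1 hψ β
  obtain ⟨B1, hB10, hB1⟩ := bound_of_continuousOn (ι := Fin m × Fin m) hDcpt
    (F := fun x p => P.ginv x p.1 p.2)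
    (fun p => (hPdom.1 p.1 p.2).continuous.continuousOn)
  obtain ⟨Bφ, hBφ0, hBφ⟩ := bound_of_continuousOn (ι := Fin m × Fin n) hDcpt
    (F := fun x p => dphi φ x p.1 p.2)
    (fun p => ((contDiff_pd (hφc p.2) p.1).continuous).continuousOn)
  obtain ⟨Bψ, hBψ0, hBψ⟩ := bound_of_continuousOn (ι := Fin m × Fin n) hDcpt
    (F := fun x p => dphi ψ x p.1 p.2)
    (fun p => ((contDiff_pd (hψc p.2) p.1).continuous).continuousOn)
  obtain ⟨BΓ, hBΓ0, hBΓ⟩ := bound_of_continuousOn (ι := Fin n × Fin n × Fin n) hDcpt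
    (F := fun x t => P.ΓN (φ x) t.1 t.2.1 t.2.2)
    (fun t => ((hPtar t.1 t.2.1 t.2.2).continuous.comp hφ.continuous).continuousOn)
  have hS : IsCompact (φ '' closure D ∪ ψ '' closure D) :=
    (hDcpt.image hφ.continuous).union (hDcpt.image hψ.continuous)
  have hLipEx : ∀ t : Fin n × Fin n × Fin n, ∃ L, 0 ≤ L ∧
      ∀ y ∈ φ '' closure D ∪ ψ '' closure D, ∀ y' ∈ φ '' closure D ∪ ψ '' closure D,
        |P.ΓN y t.1 t.2.1 t.2.2 - P.ΓN y' t.1 t.2.1 t.2.2| ≤ L * ‖y - y'‖ :=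
    fun t => lipschitz_on_compact (hPtar t.1 t.2.1 t.2.2) hS
  choose Lf hLf0 hLf using hLipEx
  set L : ℝ := ∑ t : Fin n × Fin n × Fin n, Lf t with hLdef
  have hL0 : 0 ≤ L := Finset.sum_nonneg fun t _ => hLf0 t
  have hLt : ∀ t, Lf t ≤ L := fun t =>
    Finset.single_le_sum (fun t _ => hLf0 t) (Finset.mem_univ t)
  have hΓdiff : ∀ x ∈ closure D, ∀ α ϑ β : Fin n,
      |P.ΓN (φ x) α ϑ β - P.ΓN (ψ x) α ϑ β|
        ≤ L * vnorm (fun γ => φ x γ - ψ x γ) := by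
    intro x hx α ϑ β
    have hmem1 : φ x ∈ φ '' closure D ∪ ψ '' closure D :=
      Set.mem_union_left _ (Set.mem_image_of_mem φ hx)
    have hmem2 : ψ x ∈ φ '' closure D ∪ ψ '' closure D :=
      Set.mem_union_right _ (Set.mem_image_of_mem ψ hx)
    have h1 := hLf (α, ϑ, β) (φ x) hmem1 (ψ x) hmem2
    have h2 : ‖φ x - ψ x‖ ≤ vnorm (fun γ => φ x γ - ψ x γ) :=
      pi_norm_le_vnorm (fun γ => φ x γ - ψ x γ)
    calc |P.ΓN (φ x) α ϑ β - P.ΓN (ψ x) α ϑ β|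
        ≤ Lf (α, ϑ, β) * ‖φ x - ψ x‖ := h1
      _ ≤ L * vnorm (fun γ => φ x γ - ψ x γ) :=
        mul_le_mul (hLt _) h2 (norm_nonneg _) hL0
  set c : ℝ := B1 * (BΓ * Bφ + BΓ * Bψ + L * Bψ * Bψ) with hcdef
  have hc0 : 0 ≤ c := by
    apply mul_nonneg hB10
    have := mul_nonneg hBΓ0 hBφ0
    have := mul_nonneg hBΓ0 hBψ0
    have := mul_nonneg (mul_nonneg hL0 hBψ0) hBψ0
    linarith
  -- termwise bound
  have hT : ∀ x ∈ closure D, ∀ (α ϑ β : Fin n) (i j : Fin m),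
      |P.ginv x i j * P.ΓN (φ x) α ϑ β * dphi φ x i ϑ * dphi φ x j β
        - P.ginv x i j * P.ΓN (ψ x) α ϑ β * dphi ψ x i ϑ * dphi ψ x j β|
      ≤ c * (vnorm (fun γ => φ x γ - ψ x γ)
          + vnorm (fun p : Fin m × Fin n => dphi φ x p.1 p.2 - dphi ψ x p.1 p.2)) := by
    intro x hx α ϑ β i j
    have hg : |P.ginv x i j| ≤ B1 := hB1 x hx (i, j)
    have hΓ1 : |P.ΓN (φ x) α ϑ β| ≤ BΓ := hBΓ x hx (α, ϑ, β)
    have ha2 : |dphi φ x j β| ≤ Bφ := hBφ x hx (j, β)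
    have hb1 : |dphi ψ x i ϑ| ≤ Bψ := hBψ x hx (i, ϑ)
    have hb2 : |dphi ψ x j β| ≤ Bψ := hBψ x hx (j, β)
    have hd1 : |dphi φ x i ϑ - dphi ψ x i ϑ|
        ≤ vnorm (fun p : Fin m × Fin n => dphi φ x p.1 p.2 - dphi ψ x p.1 p.2) :=
      abs_le_vnorm (fun p : Fin m × Fin n => dphi φ x p.1 p.2 - dphi ψ x p.1 p.2) (i, ϑ)
    have hd2 : |dphi φ x j β - dphi ψ x j β|
        ≤ vnorm (fun p : Fin m × Fin n => dphi φ x p.1 p.2 - dphi ψ x p.1 p.2) :=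
      abs_le_vnorm (fun p : Fin m × Fin n => dphi φ x p.1 p.2 - dphi ψ x p.1 p.2) (j, β)
    have hΓd := hΓdiff x hx α ϑ β
    set Vφ := vnorm (fun γ => φ x γ - ψ x γ) with hVφdef
    set Vd := vnorm (fun p : Fin m × Fin n => dphi φ x p.1 p.2 - dphi ψ x p.1 p.2) with hVddef
    have hVφ0 : 0 ≤ Vφ := vnorm_nonneg _
    have hVd0 : 0 ≤ Vd := vnorm_nonneg _
    have e : P.ginv x i j * P.ΓN (φ x) α ϑ β * dphi φ x i ϑ * dphi φ x j β
        - P.ginv x i j * P.ΓN (ψ x) α ϑ β * dphi ψ x i ϑ * dphi ψ x j β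
      = P.ginv x i j * P.ΓN (φ x) α ϑ β * (dphi φ x i ϑ - dphi ψ x i ϑ) * dphi φ x j β
        + P.ginv x i j * P.ΓN (φ x) α ϑ β * dphi ψ x i ϑ * (dphi φ x j β - dphi ψ x j β)
        + P.ginv x i j * (P.ΓN (φ x) α ϑ β - P.ΓN (ψ x) α ϑ β) * dphi ψ x i ϑ
            * dphi ψ x j β := by ring
    rw [e]
    have m1 : |P.ginv x i j * P.ΓN (φ x) α ϑ β * (dphi φ x i ϑ - dphi ψ x i ϑ)
        * dphi φ x j β| ≤ B1 * BΓ * Vd * Bφ := mul4_abs_le hg hΓ1 hd1 ha2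
    have m2 : |P.ginv x i j * P.ΓN (φ x) α ϑ β * dphi ψ x i ϑ
        * (dphi φ x j β - dphi ψ x j β)| ≤ B1 * BΓ * Bψ * Vd := mul4_abs_le hg hΓ1 hb1 hd2
    have m3 : |P.ginv x i j * (P.ΓN (φ x) α ϑ β - P.ΓN (ψ x) α ϑ β) * dphi ψ x i ϑ
        * dphi ψ x j β| ≤ B1 * (L * Vφ) * Bψ * Bψ := mul4_abs_le hg hΓd hb1 hb2
    have tri := abs_add_three
      (P.ginv x i j * P.ΓN (φ x) α ϑ β * (dphi φ x i ϑ - dphi ψ x i ϑ) * dphi φ x j β)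
      (P.ginv x i j * P.ΓN (φ x) α ϑ β * dphi ψ x i ϑ * (dphi φ x j β - dphi ψ x j β))
      (P.ginv x i j * (P.ΓN (φ x) α ϑ β - P.ΓN (ψ x) α ϑ β) * dphi ψ x i ϑ * dphi ψ x j β)
    have eid : c * (Vφ + Vd) = B1 * BΓ * Vd * Bφ + B1 * BΓ * Bψ * Vd
        + B1 * (L * Vφ) * Bψ * Bψ
        + (B1 * BΓ * Bφ * Vφ + B1 * BΓ * Bψ * Vφ + B1 * L * Bψ * Bψ * Vd) := by
      rw [hcdef]; ring
    have k1 : 0 ≤ B1 * BΓ * Bφ * Vφ :=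
      mul_nonneg (mul_nonneg (mul_nonneg hB10 hBΓ0) hBφ0) hVφ0
    have k2 : 0 ≤ B1 * BΓ * Bψ * Vφ :=
      mul_nonneg (mul_nonneg (mul_nonneg hB10 hBΓ0) hBψ0) hVφ0
    have k3 : 0 ≤ B1 * L * Bψ * Bψ * Vd :=
      mul_nonneg (mul_nonneg (mul_nonneg (mul_nonneg hB10 hL0) hBψ0) hBψ0) hVd0
    linarith
  -- sum bound
  have hQ : ∀ x ∈ closure D, ∀ α : Fin n,
      |(∑ i, ∑ j, ∑ ϑ, ∑ β,
          P.ginv x i j * P.ΓN (φ x) α ϑ β * dphi φ x i ϑ * dphi φ x j β)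
        - ∑ i, ∑ j, ∑ ϑ, ∑ β,
          P.ginv x i j * P.ΓN (ψ x) α ϑ β * dphi ψ x i ϑ * dphi ψ x j β|
      ≤ (m : ℝ) * m * n * n * (c * (vnorm (fun γ => φ x γ - ψ x γ)
          + vnorm (fun p : Fin m × Fin n => dphi φ x p.1 p.2 - dphi ψ x p.1 p.2))) := by
    intro x hx α
    simp only [← Finset.sum_sub_distrib]
    refine le_trans (Finset.abs_sum_le_sum_abs _ _) ?_
    refine le_trans (Finset.sum_le_sum fun i _ => Finset.abs_sum_le_sum_abs _ _) ?_
    refine le_trans (Finset.sum_le_sum fun i _ => Finset.sum_le_sum fun j _ =>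
      Finset.abs_sum_le_sum_abs _ _) ?_
    refine le_trans (Finset.sum_le_sum fun i _ => Finset.sum_le_sum fun j _ =>
      Finset.sum_le_sum fun ϑ _ => Finset.abs_sum_le_sum_abs _ _) ?_
    refine le_trans (Finset.sum_le_sum fun i _ => Finset.sum_le_sum fun j _ =>
      Finset.sum_le_sum fun ϑ _ => Finset.sum_le_sum fun β _ => hT x hx α ϑ β i j) ?_
    simp only [Finset.sum_const, Finset.card_univ, Fintype.card_fin, nsmul_eq_mul]
    apply le_of_eq; ring
  -- per-component bound
  have hα : ∀ x ∈ D, ∀ α : Fin n,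
      |lap P (fun z => φ z α - ψ z α) x|
        ≤ |uvar P φ 0 x α - uvar P ψ 0 x α|
          + (m : ℝ) * m * n * n * (c * (vnorm (fun γ => φ x γ - ψ x γ)
            + vnorm (fun p : Fin m × Fin n => dphi φ x p.1 p.2 - dphi ψ x p.1 p.2))) := by
    intro x hx α
    have hid : lap P (fun z => φ z α - ψ z α) x
        = ((∑ i, ∑ j, ∑ ϑ, ∑ β,
              P.ginv x i j * P.ΓN (φ x) α ϑ β * dphi φ x i ϑ * dphi φ x j β)
            - ∑ i, ∑ j, ∑ ϑ, ∑ β,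
              P.ginv x i j * P.ΓN (ψ x) α ϑ β * dphi ψ x i ϑ * dphi ψ x j β)
          - (uvar P φ 0 x α - uvar P ψ 0 x α) := by
      calc lap P (fun z => φ z α - ψ z α) x
          = lap P (fun z => φ z α) x - lap P (fun z => ψ z α) x :=
            lap_sub P (hφc α) (hψc α) x
        _ = _ := by rw [lap_eq_Q_sub_u, lap_eq_Q_sub_u]; ring
    rw [hid]
    have tri : ∀ a b : ℝ, |a - b| ≤ |a| + |b| := fun a b => by
      calc |a - b| = |a + -b| := by ring_nf
      _ ≤ |a| + |-b| := abs_add_le _ _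
      _ = |a| + |b| := by rw [abs_neg]
    have h1 := tri ((∑ i, ∑ j, ∑ ϑ, ∑ β,
        P.ginv x i j * P.ΓN (φ x) α ϑ β * dphi φ x i ϑ * dphi φ x j β)
      - ∑ i, ∑ j, ∑ ϑ, ∑ β,
        P.ginv x i j * P.ΓN (ψ x) α ϑ β * dphi ψ x i ϑ * dphi ψ x j β)
      (uvar P φ 0 x α - uvar P ψ 0 x α)
    have h2 := hQ x (subset_closure hx) α
    linarith
  -- assemble
  refine ⟨(n : ℝ) * ((m : ℝ) * m * n * n * c) + n + 1, ?_, ?_⟩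
  · have h0 : (0:ℝ) ≤ (n : ℝ) * ((m : ℝ) * m * n * n * c) := by positivity
    have h1 : (0:ℝ) ≤ (n : ℝ) := Nat.cast_nonneg n
    linarith
  intro x hx
  set Vφ := vnorm (fun α : Fin n => φ x α - ψ x α) with hVφdef
  set Vd := vnorm (fun p : Fin m × Fin n => dphi φ x p.1 p.2 - dphi ψ x p.1 p.2) with hVddef
  set Vu := vnorm (fun α : Fin n => uvar P φ 0 x α - uvar P ψ 0 x α) with hVudef
  have hVφ0 : 0 ≤ Vφ := vnorm_nonneg _
  have hVd0 : 0 ≤ Vd := vnorm_nonneg _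
  have hVu0 : 0 ≤ Vu := vnorm_nonneg _
  set M' : ℝ := (n : ℝ) * ((m : ℝ) * m * n * n * c) with hM'def
  have hM'0 : 0 ≤ M' := by positivity
  calc vnorm (fun α : Fin n => lap P (fun z => φ z α - ψ z α) x)
      ≤ ∑ α, |lap P (fun z => φ z α - ψ z α) x| := vnorm_le_sum _
    _ ≤ ∑ α : Fin n, (|uvar P φ 0 x α - uvar P ψ 0 x α|
        + (m : ℝ) * m * n * n * (c * (Vφ + Vd))) :=
        Finset.sum_le_sum fun α _ => hα x hx α
    _ = (∑ α, |uvar P φ 0 x α - uvar P ψ 0 x α|)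
        + (n : ℝ) * ((m : ℝ) * m * n * n * (c * (Vφ + Vd))) := by
        rw [Finset.sum_add_distrib]
        simp [Finset.sum_const, Finset.card_univ, Fintype.card_fin, nsmul_eq_mul]
    _ ≤ (n : ℝ) * Vu + M' * (Vφ + Vd) := by
        have hu : (∑ α, |uvar P φ 0 x α - uvar P ψ 0 x α|) ≤ (n : ℝ) * Vu := by
          calc (∑ α, |uvar P φ 0 x α - uvar P ψ 0 x α|) ≤ ∑ _α : Fin n, Vu :=
            Finset.sum_le_sum fun α _ =>
              abs_le_vnorm (fun α : Fin n => uvar P φ 0 x α - uvar P ψ 0 x α) α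
          _ = (n : ℝ) * Vu := by
            simp [Finset.sum_const, Finset.card_univ, Fintype.card_fin, nsmul_eq_mul]
        have he : (n : ℝ) * ((m : ℝ) * m * n * n * (c * (Vφ + Vd))) = M' * (Vφ + Vd) := by
          rw [hM'def]; ring
        linarith
    _ ≤ (M' + n + 1) * (Vφ + Vd + Vu) := by
        have e : (M' + (n:ℝ) + 1) * (Vφ + Vd + Vu)
            = (n : ℝ) * Vu + M' * (Vφ + Vd)
              + (M' * Vu + Vu + ((n:ℝ) + 1) * Vφ + ((n:ℝ) + 1) * Vd) := by ring
        have p1 : 0 ≤ M' * Vu := mul_nonneg hM'0 hVu0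
        have p2 : 0 ≤ ((n:ℝ) + 1) * Vφ := by positivity
        have p3 : 0 ≤ ((n:ℝ) + 1) * Vd := by positivity
        linarith
    _ = ((n : ℝ) * ((m : ℝ) * m * n * n * c) + n + 1) * (Vφ + Vd + Vu) := by
        rw [hM'def]


end Polyharm
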